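/- Let α, β ∈ (−π, π] with sin((α−β)/2) ≠ 0, let M be an n×n Hermitian unitary complex matrix, and let U = exp(i(α+β)/2)·( cos((α−β)/2)·I + i·sin((α−β)/2)·M ). Then the scattering matrix S(k) is modularly permutation-symmetric for every real k > 0 if and only if M is modularly permutation-symmetric. -/

import Mathlib

open Matrix Real

/-- A square matrix is modularly permutation-symmetric (MPS) if all its diagonal
entries have the same modulus and all its off-diagonal entries have the same modulus. -/
def IsMPS {n : ℕ} (M : Matrix (Fin n) (Fin n) ℂ) : Prop :=
  ∃ r t : ℝ, 0 ≤ r ∧ 0 ≤ t ∧ (∀ j, ‖M j j‖ = r) ∧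
    ∀ j l, j ≠ l → ‖M j l‖ = t

lemma aux_abs_swap (x y : ℝ) (w : ℂ) (hw : ‖w‖ = 1) :
    ‖(x:ℂ)*w + y‖ = ‖(y:ℂ)*w + x‖ := by
  have h1 : w * (starRingEnd ℂ) w = 1 := by
    rw [Complex.mul_conj]
    norm_cast
    rw [Complex.normSq_eq_norm_sq, hw]; norm_num
  have h2 : (x:ℂ)*w + y = w * ((x:ℂ) + (y:ℂ) * (starRingEnd ℂ) w) := by
    linear_combination (-(y:ℂ)) * h1
  have h3 : ((x:ℂ) + (y:ℂ) * (starRingEnd ℂ) w) = (starRingEnd ℂ) ((x:ℂ) + (y:ℂ)*w) := by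
    simp [map_add, _root_.map_mul, Complex.conj_ofReal]
  rw [h2, norm_mul, hw, one_mul, h3, Complex.norm_conj]
  ring_nf

lemma aux_ne_zero (k : ℝ) (hk : 0 < k) (w : ℂ) (hw : ‖w‖ = 1) :
    ((k:ℂ)-1)*w + ((k:ℂ)+1) ≠ 0 := by
  intro h
  have h1 : ((k:ℂ)+1) = -(((k:ℂ)-1)*w) := by linear_combination h
  have h2 : ‖(k:ℂ)+1‖ = ‖(k:ℂ)-1‖ := by
    rw [h1, norm_neg, norm_mul, hw, mul_one]
  have e1 : ((k:ℂ)+1) = ((k+1:ℝ):ℂ) := by push_cast; ring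
  have e2 : ((k:ℂ)-1) = ((k-1:ℝ):ℂ) := by push_cast; ring
  rw [e1, e2, Complex.norm_real, Complex.norm_real, Real.norm_eq_abs, Real.norm_eq_abs] at h2
  rw [abs_of_pos (by linarith)] at h2
  rcases abs_cases (k-1) with ⟨h3,_⟩|⟨h3,_⟩ <;> rw [h3] at h2 <;> linarith

lemma aux_mul_expand {n : ℕ} (M : Matrix (Fin n) (Fin n) ℂ) (hM2 : M * M = 1)
    (x y x' y' : ℂ) :
    (x • (1 : Matrix (Fin n) (Fin n) ℂ) + y • M) * (x' • 1 + y' • M) =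
      (x*x' + y*y') • (1 : Matrix (Fin n) (Fin n) ℂ) + (x*y' + y*x') • M := by
  simp only [Matrix.add_mul, Matrix.mul_add, Matrix.smul_mul, Matrix.mul_smul,
    one_mul, mul_one, hM2, smul_smul]
  module

lemma aux_abssq {c d m : ℂ} (hm : m.im = 0) (hre : (c * (starRingEnd ℂ) d).re = 0) :
    ‖c + d * m‖^2 = ‖c‖^2 + ‖d‖^2 * ‖m‖^2 := by
  have hmr : m = ((m.re : ℝ) : ℂ) := by
    apply Complex.ext <;> simp [hm]
  set x := m.re with hx
  have h0 : (c * (starRingEnd ℂ) (d * (x:ℂ))).re = 0 := by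
    have : c * (starRingEnd ℂ) (d * (x:ℂ)) = (c * (starRingEnd ℂ) d) * (x:ℂ) := by
      rw [_root_.map_mul, Complex.conj_ofReal]; ring
    rw [this, Complex.mul_re]
    simp [hre]
  rw [hmr]
  rw [Complex.sq_norm, Complex.sq_norm, Complex.sq_norm, Complex.normSq_add, h0,
    Complex.normSq_mul, Complex.normSq_ofReal]
  rw [Complex.norm_real, Real.norm_eq_abs, _root_.sq_abs]; ring

lemma aux_mps_iff {n : ℕ} (M : Matrix (Fin n) (Fin n) ℂ)
    (hdiag : ∀ j, (M j j).im = 0) (c d : ℂ) (hd : d ≠ 0)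
    (hre : (c * (starRingEnd ℂ) d).re = 0) :
    IsMPS (c • (1 : Matrix (Fin n) (Fin n) ℂ) + d • M) ↔ IsMPS M := by
  have hdabs : 0 < ‖d‖ := norm_pos_iff.mpr hd
  have hdiagE : ∀ j, (c • (1 : Matrix (Fin n) (Fin n) ℂ) + d • M) j j = c + d * M j j := by
    intro j; simp [Matrix.add_apply, Matrix.smul_apply, Matrix.one_apply]
  have hoffE : ∀ j l, j ≠ l → (c • (1 : Matrix (Fin n) (Fin n) ℂ) + d • M) j l = d * M j l := by
    intro j l hjl; simp [Matrix.add_apply, Matrix.smul_apply, Matrix.one_apply, hjl]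
  constructor
  · rintro ⟨r, t, hr, ht, hdg, hof⟩
    refine ⟨Real.sqrt ((r^2 - (‖c‖)^2)/(‖d‖)^2), t / ‖d‖,
      Real.sqrt_nonneg _, by positivity, ?_, ?_⟩
    · intro j
      have h1 := hdg j
      rw [hdiagE j] at h1
      have h2 := aux_abssq (hdiag j) hre
      rw [h1] at h2
      have h3 : ‖M j j‖^2 = (r^2 - (‖c‖)^2)/(‖d‖)^2 := by
        field_simp
        linarith
      rw [← h3, Real.sqrt_sq (by positivity)]
    · intro j l hjl
      have h1 := hof j l hjl
      rw [hoffE j l hjl, norm_mul] at h1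
      field_simp
      linarith [h1]
  · rintro ⟨r, t, hr, ht, hdg, hof⟩
    refine ⟨Real.sqrt ((‖c‖)^2 + (‖d‖)^2 * r^2), ‖d‖ * t,
      Real.sqrt_nonneg _, by positivity, ?_, ?_⟩
    · intro j
      rw [hdiagE j]
      have h2 := aux_abssq (hdiag j) hre
      rw [hdg j] at h2
      rw [← Real.sqrt_sq (norm_nonneg _), h2]
    · intro j l hjl
      rw [hoffE j l hjl, norm_mul, hof j l hjl]

theorem stmt_13 (n : ℕ) (α β : ℝ)
    (hα : α ∈ Set.Ioc (-π) π) (hβ : β ∈ Set.Ioc (-π) π)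
    (hsin : Real.sin ((α - β) / 2) ≠ 0)
    (M : Matrix (Fin n) (Fin n) ℂ)
    (hM : M.IsHermitian) (hMu : M ∈ Matrix.unitaryGroup (Fin n) ℂ)
    (U : Matrix (Fin n) (Fin n) ℂ)
    (hU : U = Complex.exp (Complex.I * ((α + β) / 2)) •
        ((Real.cos ((α - β) / 2) : ℂ) • (1 : Matrix (Fin n) (Fin n) ℂ) +
          (Complex.I * (Real.sin ((α - β) / 2) : ℂ)) • M)) :
    (∀ k : ℝ, 0 < k →
        IsMPS ((((k : ℂ) - 1) • U + ((k : ℂ) + 1) • (1 : Matrix (Fin n) (Fin n) ℂ))⁻¹ *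
          (((k : ℂ) + 1) • U + ((k : ℂ) - 1) • (1 : Matrix (Fin n) (Fin n) ℂ)))) ↔
      IsMPS M := by
  -- notation
  set θ : ℝ := (α - β) / 2 with hθ
  set e : ℂ := Complex.exp (Complex.I * ((α + β) / 2)) with he
  set a : ℂ := e * (Real.cos θ : ℂ) with ha
  set b : ℂ := e * (Complex.I * (Real.sin θ : ℂ)) with hb
  -- basic facts
  have hM2 : M * M = 1 := by
    have h1 := (Unitary.mem_iff.mp hMu).1
    rw [Matrix.star_eq_conjTranspose, hM.eq] at h1
    exact h1
  have hdiag : ∀ j, (M j j).im = 0 := by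
    intro j
    have h : Mᴴ j j = M j j := by rw [hM.eq]
    rw [Matrix.conjTranspose_apply] at h
    exact Complex.conj_eq_iff_im.mp h
  have hUab : U = a • (1 : Matrix (Fin n) (Fin n) ℂ) + b • M := by
    rw [hU, smul_add, smul_smul, smul_smul]
  have hb0 : b ≠ 0 := by
    rw [hb]
    exact mul_ne_zero (Complex.exp_ne_zero _)
      (mul_ne_zero Complex.I_ne_zero (Complex.ofReal_ne_zero.mpr hsin))
  set w₁ : ℂ := e * ((Real.cos θ : ℂ) + Complex.I * (Real.sin θ : ℂ)) with hw₁
  set w₂ : ℂ := e * ((Real.cos θ : ℂ) - Complex.I * (Real.sin θ : ℂ)) with hw₂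
  have habse : ‖e‖ = 1 := by
    rw [he, Complex.norm_exp]
    simp
  have habs1 : ‖w₁‖ = 1 := by
    rw [hw₁, norm_mul, habse, one_mul]
    have : ((Real.cos θ : ℂ) + Complex.I * (Real.sin θ : ℂ)) = Complex.exp ((θ:ℂ) * Complex.I) := by
      rw [Complex.exp_mul_I, ← Complex.ofReal_cos, ← Complex.ofReal_sin]; ring
    rw [this, Complex.norm_exp_ofReal_mul_I]
  have habs2 : ‖w₂‖ = 1 := by
    rw [hw₂, norm_mul, habse, one_mul]
    have : ((Real.cos θ : ℂ) - Complex.I * (Real.sin θ : ℂ))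
        = Complex.exp (((-θ : ℝ):ℂ) * Complex.I) := by
      rw [Complex.exp_mul_I, ← Complex.ofReal_cos, ← Complex.ofReal_sin,
        Real.cos_neg, Real.sin_neg]
      push_cast; ring
    rw [this, Complex.norm_exp_ofReal_mul_I]
  -- the key structural fact
  have main : ∀ k : ℝ, 0 < k → ∃ c d : ℂ, d ≠ 0 ∧ (c * (starRingEnd ℂ) d).re = 0 ∧
      (((k:ℂ)-1) • U + ((k:ℂ)+1) • (1 : Matrix (Fin n) (Fin n) ℂ))⁻¹ *
        (((k:ℂ)+1) • U + ((k:ℂ)-1) • (1 : Matrix (Fin n) (Fin n) ℂ)) = c • 1 + d • M := by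
    intro k hk
    set p : ℂ := ((k:ℂ)-1)*a + ((k:ℂ)+1) with hp
    set q : ℂ := ((k:ℂ)-1)*b with hq
    set p' : ℂ := ((k:ℂ)+1)*a + ((k:ℂ)-1) with hp'
    set q' : ℂ := ((k:ℂ)+1)*b with hq'
    have hsum : p + q = ((k:ℂ)-1)*w₁ + ((k:ℂ)+1) := by
      rw [hp, hq, hw₁, ha, hb]; ring
    have hdif : p - q = ((k:ℂ)-1)*w₂ + ((k:ℂ)+1) := by
      rw [hp, hq, hw₂, ha, hb]; ring
    have hsum' : p' + q' = ((k:ℂ)+1)*w₁ + ((k:ℂ)-1) := by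
      rw [hp', hq', hw₁, ha, hb]; ring
    have hdif' : p' - q' = ((k:ℂ)+1)*w₂ + ((k:ℂ)-1) := by
      rw [hp', hq', hw₂, ha, hb]; ring
    have h1 : p + q ≠ 0 := by rw [hsum]; exact aux_ne_zero k hk w₁ habs1
    have h2 : p - q ≠ 0 := by rw [hdif]; exact aux_ne_zero k hk w₂ habs2
    set D : ℂ := (p+q)*(p-q) with hD
    have hD0 : D ≠ 0 := mul_ne_zero h1 h2
    refine ⟨(p*p' - q*q')/D, (p*q' - q*p')/D, ?_, ?_, ?_⟩
    · -- d ≠ 0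
      apply div_ne_zero _ hD0
      have : p*q' - q*p' = 4*(k:ℂ)*b := by rw [hp, hq, hp', hq']; ring
      rw [this]
      refine mul_ne_zero (mul_ne_zero (by norm_num) ?_) hb0
      exact_mod_cast ne_of_gt hk
    · -- Re(c conj d) = 0
      set c : ℂ := (p*p' - q*q')/D with hc
      set d : ℂ := (p*q' - q*p')/D with hd
      have hcd1 : ‖c + d‖ = 1 := by
        have hcd : c + d = (p' + q')/(p + q) := by
          rw [hc, hd, hD]; field_simp; ring
        rw [hcd, norm_div]
        have k1 : p' + q' = ((k+1:ℝ):ℂ)*w₁ + ((k-1:ℝ):ℂ) := by rw [hsum']; push_cast; ring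
        have k2 : p + q = ((k-1:ℝ):ℂ)*w₁ + ((k+1:ℝ):ℂ) := by rw [hsum]; push_cast; ring
        rw [k1, k2, aux_abs_swap (k+1) (k-1) w₁ habs1]
        apply div_self
        rw [← k2]
        exact norm_ne_zero_iff.mpr h1
      have hcd2 : ‖c - d‖ = 1 := by
        have hcd : c - d = (p' - q')/(p - q) := by
          rw [hc, hd, hD]; field_simp; ring
        rw [hcd, norm_div]
        have k1 : p' - q' = ((k+1:ℝ):ℂ)*w₂ + ((k-1:ℝ):ℂ) := by rw [hdif']; push_cast; ring
        have k2 : p - q = ((k-1:ℝ):ℂ)*w₂ + ((k+1:ℝ):ℂ) := by rw [hdif]; push_cast; ring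
        rw [k1, k2, aux_abs_swap (k+1) (k-1) w₂ habs2]
        apply div_self
        rw [← k2]
        exact norm_ne_zero_iff.mpr h2
      have n1 : Complex.normSq (c + d) = 1 := by
        rw [← Complex.sq_norm, hcd1]; norm_num
      have n2 : Complex.normSq (c - d) = 1 := by
        rw [← Complex.sq_norm, hcd2]; norm_num
      have e1 := Complex.normSq_add c d
      have e2 := Complex.normSq_sub c d
      rw [n1] at e1
      rw [n2] at e2
      linarith
    · -- the scattering matrix formula
      have hA : ((k:ℂ)-1) • U + ((k:ℂ)+1) • (1 : Matrix (Fin n) (Fin n) ℂ)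
          = p • 1 + q • M := by
        rw [hUab, hp, hq, smul_add, smul_smul, smul_smul]
        module
      have hB : ((k:ℂ)+1) • U + ((k:ℂ)-1) • (1 : Matrix (Fin n) (Fin n) ℂ)
          = p' • 1 + q' • M := by
        rw [hUab, hp', hq', smul_add, smul_smul, smul_smul]
        module
      rw [hA, hB]
      have hinv : (p • (1 : Matrix (Fin n) (Fin n) ℂ) + q • M)⁻¹
          = D⁻¹ • (p • 1 + (-q) • M) := by
        apply Matrix.inv_eq_right_inv
        rw [Matrix.mul_smul, aux_mul_expand M hM2]
        have e1 : p*p + q*(-q) = D := by rw [hD]; ring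
        have e2 : p*(-q) + q*p = 0 := by ring
        rw [e1, e2, zero_smul, add_zero, smul_smul, inv_mul_cancel₀ hD0, one_smul]
      rw [hinv, Matrix.smul_mul, aux_mul_expand M hM2, smul_add, smul_smul, smul_smul]
      congr 1
      · congr 1
        field_simp
        ring
      · congr 1
        field_simp
        ring
  constructor
  · intro h
    obtain ⟨c, d, hd, hre, hS⟩ := main 1 one_pos
    have h1 := h 1 one_pos
    rw [show ((1:ℝ):ℂ) = (1:ℂ) by norm_num] at h1 hS
    rw [hS] at h1
    exact (aux_mps_iff M hdiag c d hd hre).mp h1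
  · intro h k hk
    obtain ⟨c, d, hd, hre, hS⟩ := main k hk
    rw [hS]
    exact (aux_mps_iff M hdiag c d hd hre).mpr h
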